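/- Let ψ denote the digamma function, ψ(x) = (log Γ)'(x) for x > 0. Then the function h defined on (0, ∞) by h(t) = t · ψ'(t) is strictly decreasing on (0, ∞). -/

import Mathlib

open Real Set Filter Finset Topology

namespace TrigammaAux

/-! ### Basic summability -/

lemma summable_aux {a : ℝ} (ha : 0 < a) {p : ℕ} (hp : 2 ≤ p) :
    Summable (fun k : ℕ => 1 / (a + k) ^ p) := by
  rw [← summable_nat_add_iff 1]
  have hs : Summable (fun k : ℕ => 1 / ((k : ℝ) + 1) ^ p) := by
    have := (summable_nat_add_iff (f := fun n : ℕ => 1 / (n : ℝ) ^ p) 1).2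
      (summable_one_div_nat_pow.2 (by omega))
    simpa [Nat.cast_add] using this
  apply Summable.of_nonneg_of_le (fun k => by positivity) (fun k => ?_) hs
  apply one_div_le_one_div_of_le (by positivity)
  exact pow_le_pow_left₀ (by positivity) (by push_cast; linarith) p

noncomputable def trig (x : ℝ) : ℝ := ∑' k : ℕ, 1 / (x + k) ^ 2

noncomputable def trig3 (x : ℝ) : ℝ := ∑' k : ℕ, 1 / (x + k) ^ 3

noncomputable def psi0 (x : ℝ) : ℝ :=
  -Real.eulerMascheroniConstant + ∑' k : ℕ, (1 / ((k : ℝ) + 1) - 1 / (x + k))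

/-! ### Helpers for uniform convergence -/

lemma comp_succ {α : Type*} [UniformSpace α] {F : ℕ → ℝ → α} {f : ℝ → α} {s : Set ℝ}
    (h : TendstoUniformlyOn F f atTop s) :
    TendstoUniformlyOn (fun n => F (n + 1)) f atTop s :=
  fun u hu => (tendsto_add_atTop_nat 1).eventually (h u hu)

lemma const_unif {c : ℕ → ℝ} {L : ℝ} (h : Tendsto c atTop (𝓝 L)) (s : Set ℝ) :
    TendstoUniformlyOn (fun n (_ : ℝ) => c n) (fun _ => L) atTop s := by
  rw [Metric.tendstoUniformlyOn_iff]
  intro ε hε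
  filter_upwards [Metric.tendsto_nhds.mp h ε hε] with n hn x _
  rw [dist_comm]
  exact hn

lemma subset_Icc {K : Set ℝ} (hK : K ⊆ Ioi 0) (hKc : IsCompact K) (hne : K.Nonempty) :
    ∃ a b : ℝ, 0 < a ∧ K ⊆ Icc a b :=
  ⟨sInf K, sSup K, hK (hKc.sInf_mem hne),
    fun x hx => ⟨csInf_le hKc.bddBelow hx, le_csSup hKc.bddAbove hx⟩⟩

/-! ### Uniform convergence of the three levels of series -/

lemma tlu_D2 :
    TendstoLocallyUniformlyOn (fun (n : ℕ) (x : ℝ) => ∑ j ∈ range (n + 1), 1 / (x + j) ^ 2)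
      trig atTop (Ioi 0) := by
  rw [tendstoLocallyUniformlyOn_iff_forall_isCompact isOpen_Ioi]
  intro K hK hKc
  rcases K.eq_empty_or_nonempty with rfl | hne
  · exact tendstoUniformlyOn_empty
  obtain ⟨a, b, ha, hab⟩ := subset_Icc hK hKc hne
  refine TendstoUniformlyOn.mono ?_ hab
  have h := tendstoUniformlyOn_tsum_nat (f := fun (k : ℕ) (x : ℝ) => 1 / (x + k) ^ 2)
    (summable_aux ha (le_refl 2)) (s := Icc a b) ?_
  · exact comp_succ h
  intro k x hx
  have hk : (0:ℝ) ≤ k := Nat.cast_nonneg k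
  have hx0 : (0:ℝ) < x + k := by linarith [hx.1]
  rw [Real.norm_eq_abs, abs_of_nonneg (by positivity)]
  apply one_div_le_one_div_of_le (by positivity)
  exact pow_le_pow_left₀ (by positivity) (by linarith [hx.1]) 2

lemma tlu_D3 :
    TendstoLocallyUniformlyOn
      (fun (n : ℕ) (x : ℝ) => ∑ j ∈ range (n + 1), (-2) * (1 / (x + j) ^ 3))
      (fun x => ∑' k : ℕ, (-2) * (1 / (x + k) ^ 3)) atTop (Ioi 0) := by
  rw [tendstoLocallyUniformlyOn_iff_forall_isCompact isOpen_Ioi]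
  intro K hK hKc
  rcases K.eq_empty_or_nonempty with rfl | hne
  · exact tendstoUniformlyOn_empty
  obtain ⟨a, b, ha, hab⟩ := subset_Icc hK hKc hne
  refine TendstoUniformlyOn.mono ?_ hab
  have h := tendstoUniformlyOn_tsum_nat (f := fun (k : ℕ) (x : ℝ) => (-2) * (1 / (x + k) ^ 3))
    (u := fun k => 2 * (1 / (a + k) ^ 3))
    ((summable_aux ha (by norm_num)).mul_left 2) (s := Icc a b) ?_
  · exact comp_succ h
  intro k x hx
  have hk : (0:ℝ) ≤ k := Nat.cast_nonneg k
  have hx0 : (0:ℝ) < x + k := by linarith [hx.1]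
  have habs : |(-2 : ℝ)| = 2 := by norm_num
  rw [Real.norm_eq_abs, abs_mul, habs,
    abs_of_nonneg (one_div_nonneg.mpr (pow_nonneg hx0.le 3))]
  have h1 : 1 / (x + (k:ℝ)) ^ 3 ≤ 1 / (a + (k:ℝ)) ^ 3 := by
    apply one_div_le_one_div_of_le (by positivity)
    exact pow_le_pow_left₀ (by positivity) (by linarith [hx.1]) 3
  linarith

/-- The sequence of "digamma approximants". -/
noncomputable def Dex (n : ℕ) (x : ℝ) : ℝ :=
  (Real.log n - ∑ j ∈ range (n + 1), 1 / ((j : ℝ) + 1)) +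
    ∑ j ∈ range (n + 1), (1 / ((j : ℝ) + 1) - 1 / (x + j))

lemma tendsto_c :
    Tendsto (fun n : ℕ => Real.log n - ∑ j ∈ range (n + 1), 1 / ((j : ℝ) + 1)) atTop
      (𝓝 (-Real.eulerMascheroniConstant)) := by
  have h1 : Tendsto (fun n : ℕ => (harmonic (n + 1) : ℝ) - Real.log ((n:ℝ) + 1)) atTop
      (𝓝 Real.eulerMascheroniConstant) := by
    have h := Real.tendsto_harmonic_sub_log.comp (tendsto_add_atTop_nat 1)
    apply h.congr
    intro n
    simp only [Function.comp_apply, Nat.cast_add, Nat.cast_one]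
  have h2 : Tendsto (fun n : ℕ => Real.log ((n : ℝ) + 1) - Real.log n) atTop (𝓝 0) := by
    have hlim : Tendsto (fun n : ℕ => Real.log (1 + 1 / n)) atTop (𝓝 0) := by
      have : Tendsto (fun n : ℕ => 1 + 1 / (n : ℝ)) atTop (𝓝 1) := by
        simpa using (tendsto_const_nhds (x := (1:ℝ))).add tendsto_one_div_atTop_nhds_zero_nat
      simpa [Function.comp_def] using (Real.continuousAt_log (by norm_num)).tendsto.comp this
    apply hlim.congr'
    filter_upwards [eventually_ge_atTop 1] with n hn
    have hn0 : (0:ℝ) < n := by exact_mod_cast hn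
    have he : (1:ℝ) + 1 / n = ((n:ℝ) + 1) / n := by field_simp
    rw [he, Real.log_div (by positivity) hn0.ne']
  have key := (h1.neg.sub h2)
  have : -Real.eulerMascheroniConstant - 0 = -Real.eulerMascheroniConstant := by ring
  rw [this] at key
  apply key.congr
  intro n
  have hh : (harmonic (n + 1) : ℝ) = ∑ j ∈ range (n + 1), 1 / ((j : ℝ) + 1) := by
    simp [harmonic, one_div]
  rw [hh]
  ring

lemma tlu_D :
    TendstoLocallyUniformlyOn Dex psi0 atTop (Ioi 0) := by
  rw [tendstoLocallyUniformlyOn_iff_forall_isCompact isOpen_Ioi]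
  intro K hK hKc
  rcases K.eq_empty_or_nonempty with rfl | hne
  · exact tendstoUniformlyOn_empty
  obtain ⟨a, b, ha, hab⟩ := subset_Icc hK hKc hne
  have hb : a ≤ b := by
    obtain ⟨x, hx⟩ := hne
    have := hab hx; linarith [this.1, this.2]
  refine TendstoUniformlyOn.mono ?_ hab
  have h1 : TendstoUniformlyOn
      (fun (n : ℕ) (_ : ℝ) => Real.log n - ∑ j ∈ range (n + 1), 1 / ((j : ℝ) + 1))
      (fun _ => -Real.eulerMascheroniConstant) atTop (Icc a b) := const_unif tendsto_c _
  -- uniform convergence of the series part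
  set a' : ℝ := min a 1 with ha'def
  have ha' : 0 < a' := lt_min ha one_pos
  have ha'1 : a' ≤ 1 := min_le_right _ _
  have hu : Summable (fun k : ℕ => (b + 1) / a' * (1 / ((k : ℝ) + 1) ^ 2)) := by
    apply Summable.mul_left
    have := (summable_nat_add_iff (f := fun n : ℕ => 1 / (n : ℝ) ^ 2) 1).2
      (summable_one_div_nat_pow.2 one_lt_two)
    simpa [Nat.cast_add] using this
  have h2 : TendstoUniformlyOn
      (fun (n : ℕ) (x : ℝ) => ∑ j ∈ range n, (1 / ((j : ℝ) + 1) - 1 / (x + j)))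
      (fun x => ∑' k : ℕ, (1 / ((k : ℝ) + 1) - 1 / (x + k))) atTop (Icc a b) := by
    apply tendstoUniformlyOn_tsum_nat hu
    intro k x hx
    have hk : (0:ℝ) ≤ k := Nat.cast_nonneg k
    have hx0 : 0 < x + k := by linarith [hx.1]
    have heq : 1 / ((k : ℝ) + 1) - 1 / (x + k) = (x - 1) / (((k : ℝ) + 1) * (x + k)) := by
      field_simp
      ring
    have hpos : (0:ℝ) < ((k : ℝ) + 1) * (x + k) := mul_pos (by positivity) hx0
    rw [heq, Real.norm_eq_abs, abs_div, abs_of_nonneg hpos.le]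
    have hnum : |x - 1| ≤ b + 1 := by
      rw [abs_le]; constructor <;> [linarith [hx.1]; linarith [hx.2]]
    have hden : a' * ((k : ℝ) + 1) ^ 2 ≤ ((k : ℝ) + 1) * (x + k) := by
      have h1' : a' + k ≤ x + k := by
        have : a' ≤ a := min_le_left _ _
        linarith [hx.1]
      have h2' : a' * ((k : ℝ) + 1) ≤ a' + k := by nlinarith
      nlinarith
    calc |x - 1| / (((k:ℝ) + 1) * (x + k)) ≤ (b + 1) / (a' * ((k:ℝ) + 1) ^ 2) :=
          div_le_div₀ (by linarith) hnum (mul_pos ha' (by positivity)) hden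
      _ = (b + 1) / a' * (1 / ((k:ℝ) + 1) ^ 2) := by
          rw [div_mul_div_comm, mul_one]
  have := h1.add (comp_succ h2)
  exact this

/-! ### The approximants to log ∘ Gamma and their derivatives -/

noncomputable def F (n : ℕ) (x : ℝ) : ℝ :=
  x * Real.log n + Real.log (Nat.factorial n) - ∑ j ∈ range (n + 1), Real.log (x + j)

lemma hasDerivAt_F {n : ℕ} {x : ℝ} (hx : 0 < x) :
    HasDerivAt (F n) (Dex n x) x := by
  have key : HasDerivAt (F n) (Real.log n - ∑ j ∈ range (n + 1), 1 / (x + j)) x := by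
    show HasDerivAt (fun x : ℝ => x * Real.log n + Real.log (Nat.factorial n) -
      ∑ j ∈ range (n + 1), Real.log (x + j)) _ x
    apply HasDerivAt.sub
    · simpa using (hasDerivAt_mul_const (Real.log n)).add_const (Real.log (Nat.factorial n))
    · apply HasDerivAt.fun_sum
      intro j _
      have hj : (0:ℝ) < x + j := by positivity
      exact ((hasDerivAt_id x).add_const (j:ℝ)).log hj.ne'
  have : Dex n x = Real.log n - ∑ j ∈ range (n + 1), 1 / (x + j) := by
    rw [Dex, Finset.sum_sub_distrib]
    ring
  rw [this]
  exact key

lemma hasDerivAt_Dex {n : ℕ} {x : ℝ} (hx : 0 < x) :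
    HasDerivAt (Dex n) (∑ j ∈ range (n + 1), 1 / (x + j) ^ 2) x := by
  apply HasDerivAt.const_add
  apply HasDerivAt.fun_sum
  intro j _
  have hj : (0:ℝ) < x + j := by positivity
  have h1 : HasDerivAt (fun x : ℝ => (x + (j:ℝ))⁻¹) (-1 / (x + j) ^ 2) x := by
    simpa using ((hasDerivAt_id x).add_const (j:ℝ)).fun_inv hj.ne'
  have h2 := h1.const_sub (1 / ((j : ℝ) + 1))
  have : HasDerivAt (fun x : ℝ => 1 / ((j:ℝ) + 1) - 1 / (x + j)) (-(-1 / (x + j) ^ 2)) x := by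
    simpa [one_div] using h2
  refine this.congr_deriv ?_
  ring

lemma hasDerivAt_D2 {n : ℕ} {x : ℝ} (hx : 0 < x) :
    HasDerivAt (fun x : ℝ => ∑ j ∈ range (n + 1), 1 / (x + j) ^ 2)
      (∑ j ∈ range (n + 1), (-2) * (1 / (x + j) ^ 3)) x := by
  apply HasDerivAt.fun_sum
  intro j _
  have hj : (0:ℝ) < x + j := by positivity
  have h1 : HasDerivAt (fun x : ℝ => ((x + (j:ℝ)) ^ 2)⁻¹)
      (-(2 * (x + j) ^ 1 * 1) / ((x + j) ^ 2) ^ 2) x :=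
    (((hasDerivAt_id x).add_const (j:ℝ)).pow 2).fun_inv (pow_pos hj 2).ne'
  have h2 : HasDerivAt (fun x : ℝ => 1 / (x + (j:ℝ)) ^ 2)
      (-(2 * (x + j) ^ 1 * 1) / ((x + j) ^ 2) ^ 2) x := by
    simpa [one_div] using h1
  refine h2.congr_deriv ?_
  field_simp

/-! ### Limits: pointwise convergence of F to log ∘ Gamma -/

lemma tendsto_F {x : ℝ} (hx : 0 < x) :
    Tendsto (fun n => F n x) atTop (𝓝 (Real.log (Real.Gamma x))) := by
  have h := (Real.continuousAt_log (Real.Gamma_pos_of_pos hx).ne').tendsto.comp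
    (Real.GammaSeq_tendsto_Gamma x)
  apply h.congr'
  filter_upwards [eventually_ge_atTop 1] with n hn
  have hn0 : (0:ℝ) < n := by exact_mod_cast hn
  have hprod : (0:ℝ) < ∏ j ∈ range (n + 1), (x + j) := by
    apply Finset.prod_pos
    intro j _
    positivity
  have hnum : (0:ℝ) < (n : ℝ) ^ x * (Nat.factorial n : ℝ) := by
    have h := Real.rpow_pos_of_pos hn0 x
    have hf : (0:ℝ) < (Nat.factorial n : ℝ) := by exact_mod_cast Nat.factorial_pos n
    exact mul_pos h hf
  have hfact : (0:ℝ) < (Nat.factorial n : ℝ) := by exact_mod_cast Nat.factorial_pos n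
  simp only [Function.comp_apply, Real.GammaSeq, F]
  rw [Real.log_div hnum.ne' hprod.ne',
    Real.log_mul (Real.rpow_pos_of_pos hn0 x).ne' hfact.ne',
    Real.log_rpow hn0,
    Real.log_prod (fun j _ => by positivity)]

/-! ### The three HasDerivAt results -/

lemma hasDerivAt_logGamma {x : ℝ} (hx : 0 < x) :
    HasDerivAt (fun x : ℝ => Real.log (Real.Gamma x)) (psi0 x) x := by
  apply hasDerivAt_of_tendstoLocallyUniformlyOn isOpen_Ioi tlu_D
    (Eventually.of_forall fun n y hy => hasDerivAt_F hy)
    (fun y hy => tendsto_F hy) (mem_Ioi.2 hx)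

lemma hasDerivAt_psi0 {x : ℝ} (hx : 0 < x) :
    HasDerivAt psi0 (trig x) x := by
  apply hasDerivAt_of_tendstoLocallyUniformlyOn isOpen_Ioi tlu_D2
    (Eventually.of_forall fun n y hy => hasDerivAt_Dex hy)
    (fun y hy => tlu_D.tendsto_at hy) (mem_Ioi.2 hx)

lemma hasDerivAt_trig {x : ℝ} (hx : 0 < x) :
    HasDerivAt trig (-2 * trig3 x) x := by
  have h : HasDerivAt trig (∑' k : ℕ, (-2) * (1 / (x + k) ^ 3)) x := by
    apply hasDerivAt_of_tendstoLocallyUniformlyOn isOpen_Ioi tlu_D3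
      (Eventually.of_forall fun n y hy => hasDerivAt_D2 hy)
      (fun y hy => tlu_D2.tendsto_at hy) (mem_Ioi.2 hx)
  rwa [tsum_mul_left] at h

/-! ### The key inequality: trig x - 2x * trig3 x < 0 -/

lemma trig_upper {x : ℝ} (hx : 0 < x) :
    trig x ≤ 1 / x ^ 2 + 1 / (x + 1 / 2) := by
  have hsum : Summable (fun k : ℕ => 1 / (x + k) ^ 2) := summable_aux hx (le_refl 2)
  rw [trig, Summable.tsum_eq_zero_add hsum]
  push_cast
  simp only [add_zero]
  gcongr
  · -- tail sum ≤ 1/(x+1/2)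
    apply Real.tsum_le_of_sum_range_le (fun k => by positivity)
    intro n
    have htel : ∀ k : ℕ, 1 / (x + ((k:ℝ) + 1)) ^ 2 ≤
        (fun k : ℕ => 1 / (x + k + 1/2)) k - (fun k : ℕ => 1 / (x + k + 1/2)) (k + 1) := by
      intro k
      have hk : (0:ℝ) ≤ k := Nat.cast_nonneg k
      simp only [Nat.cast_add, Nat.cast_one]
      have p1 : (0:ℝ) < x + (k:ℝ) + 1/2 := by linarith
      have p2 : (0:ℝ) < x + ((k:ℝ) + 1) + 1/2 := by linarith
      have p3 : (0:ℝ) < x + ((k:ℝ) + 1) := by linarith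
      have hne1 := p1.ne'
      have hne2 := p2.ne'
      have hne3 := p3.ne'
      have e : 1 / (x + (k:ℝ) + 1/2) - 1 / (x + ((k:ℝ) + 1) + 1/2)
          - 1 / (x + ((k:ℝ) + 1)) ^ 2
          = (1/4) / ((x + ((k:ℝ) + 1)) ^ 2 * ((x + (k:ℝ) + 1/2) * (x + ((k:ℝ) + 1) + 1/2))) := by
        field_simp
        ring
      have epos : (0:ℝ) ≤ (1/4) / ((x + ((k:ℝ) + 1)) ^ 2
          * ((x + (k:ℝ) + 1/2) * (x + ((k:ℝ) + 1) + 1/2))) := by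
        apply div_nonneg (by norm_num)
        exact le_of_lt (mul_pos (pow_pos p3 2) (mul_pos p1 p2))
      linarith
    calc ∑ k ∈ range n, 1 / (x + ((k:ℝ) + 1)) ^ 2
        ≤ ∑ k ∈ range n, ((fun k : ℕ => 1 / (x + k + 1/2)) k -
            (fun k : ℕ => 1 / (x + k + 1/2)) (k + 1)) := Finset.sum_le_sum fun k _ => htel k
      _ = 1 / (x + 0 + 1/2) - 1 / (x + n + 1/2) := by
          rw [Finset.sum_range_sub' (fun k : ℕ => 1 / (x + k + 1/2))]
          norm_num
      _ ≤ 1 / (x + 1/2) := by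
          have hn : (0:ℝ) ≤ n := Nat.cast_nonneg n
          have : (0:ℝ) ≤ 1 / (x + n + 1/2) := by positivity
          simp only [add_zero]
          linarith

lemma trig3_lower {x : ℝ} (hx : 0 < x) :
    1 / (2 * x ^ 2) + 1 / (2 * x ^ 3) ≤ trig3 x := by
  have hsum : Summable (fun k : ℕ => 1 / (x + k) ^ 3) := summable_aux hx (by norm_num)
  have hsum' : Summable (fun k : ℕ => 1 / (x + ((k:ℝ) + 1)) ^ 3) := by
    have := (summable_nat_add_iff (f := fun k : ℕ => 1 / (x + k) ^ 3) 1).2 hsum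
    simpa [Nat.cast_add] using this
  -- partial-sum bound
  have key : ∀ n : ℕ,
      1 / (2 * x ^ 2) - 1 / (2 * (x + n) ^ 2) ≤ trig3 x - 1 / (2 * x ^ 3) := by
    intro n
    have htel : ∀ k : ℕ, (fun k : ℕ => 1 / (2 * (x + k) ^ 2)) k -
        (fun k : ℕ => 1 / (2 * (x + k) ^ 2)) (k + 1) ≤
        (1 / (x + k) ^ 3 + 1 / (x + ((k:ℝ) + 1)) ^ 3) / 2 := by
      intro k
      have hk : (0:ℝ) ≤ k := Nat.cast_nonneg k
      simp only [Nat.cast_add, Nat.cast_one]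
      have p1 : (0:ℝ) < x + (k:ℝ) := by linarith
      have p2 : (0:ℝ) < x + ((k:ℝ) + 1) := by linarith
      have hne1 := p1.ne'
      have hne2 := p2.ne'
      have e : (1 / (x + (k:ℝ)) ^ 3 + 1 / (x + ((k:ℝ) + 1)) ^ 3) / 2
          - (1 / (2 * (x + (k:ℝ)) ^ 2) - 1 / (2 * (x + ((k:ℝ) + 1)) ^ 2))
          = (2 * (x + (k:ℝ)) + 1) / (2 * (x + (k:ℝ)) ^ 3 * (x + ((k:ℝ) + 1)) ^ 3) := by
        field_simp
        ring
      have epos : (0:ℝ) ≤ (2 * (x + (k:ℝ)) + 1)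
          / (2 * (x + (k:ℝ)) ^ 3 * (x + ((k:ℝ) + 1)) ^ 3) := by
        apply div_nonneg (by linarith)
        have := mul_pos (mul_pos two_pos (pow_pos p1 3)) (pow_pos p2 3)
        linarith
      linarith
    have hpartial : ∀ n : ℕ,
        ∑ k ∈ range n, ((1 / (x + k) ^ 3 + 1 / (x + ((k:ℝ) + 1)) ^ 3) / 2)
          ≤ trig3 x - 1 / (2 * x ^ 3) := by
      intro m
      have e1 : ∑ k ∈ range m, ((1 / (x + k) ^ 3 + 1 / (x + ((k:ℝ) + 1)) ^ 3) / 2)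
          = (∑ k ∈ range m, 1 / (x + k) ^ 3) / 2
            + (∑ k ∈ range m, 1 / (x + ((k:ℝ) + 1)) ^ 3) / 2 := by
        rw [← Finset.sum_div, Finset.sum_add_distrib, add_div]
      rw [e1]
      have b1 : ∑ k ∈ range m, 1 / (x + k) ^ 3 ≤ trig3 x :=
        Summable.sum_le_tsum _ (fun k _ => by positivity) hsum
      have b2 : ∑ k ∈ range m, 1 / (x + ((k:ℝ) + 1)) ^ 3 ≤ ∑' k : ℕ, 1 / (x + ((k:ℝ) + 1)) ^ 3 :=
        Summable.sum_le_tsum _ (fun k _ => by positivity) hsum'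
      have b3 : ∑' k : ℕ, 1 / (x + ((k:ℝ) + 1)) ^ 3 = trig3 x - 1 / (x + (0:ℕ)) ^ 3 := by
        rw [trig3, Summable.tsum_eq_zero_add hsum]
        push_cast
        ring
      rw [b3] at b2
      push_cast at b2 ⊢
      simp only [Nat.cast_zero, add_zero] at b2
      rw [show (1:ℝ) / (2 * x ^ 3) = 1 / x ^ 3 / 2 from by rw [div_div, mul_comm]]
      linarith
    calc 1 / (2 * x ^ 2) - 1 / (2 * (x + n) ^ 2)
        = ∑ k ∈ range n, ((fun k : ℕ => 1 / (2 * (x + k) ^ 2)) k -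
            (fun k : ℕ => 1 / (2 * (x + k) ^ 2)) (k + 1)) := by
          rw [Finset.sum_range_sub' (fun k : ℕ => 1 / (2 * (x + k) ^ 2))]
          norm_num
      _ ≤ ∑ k ∈ range n, ((1 / (x + k) ^ 3 + 1 / (x + ((k:ℝ) + 1)) ^ 3) / 2) :=
          Finset.sum_le_sum fun k _ => htel k
      _ ≤ trig3 x - 1 / (2 * x ^ 3) := hpartial n
  -- take the limit n → ∞
  have hlim : Tendsto (fun n : ℕ => 1 / (2 * x ^ 2) - 1 / (2 * (x + n) ^ 2)) atTop
      (𝓝 (1 / (2 * x ^ 2))) := by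
    have hg : Tendsto (fun n : ℕ => x + (n:ℝ)) atTop atTop :=
      tendsto_atTop_add_const_left _ x tendsto_natCast_atTop_atTop
    have hg2 : Tendsto (fun n : ℕ => 2 * (x + (n:ℝ)) ^ 2) atTop atTop := by
      have := (hg.atTop_mul_atTop₀ hg).const_mul_atTop two_pos
      apply this.congr
      intro n
      ring
    have h1 : Tendsto (fun n : ℕ => 1 / (2 * (x + (n:ℝ)) ^ 2)) atTop (𝓝 0) := by
      have h := tendsto_inv_atTop_zero.comp hg2
      apply h.congr
      intro n
      simp [Function.comp, one_div]
    simpa using tendsto_const_nhds.sub h1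
  have := le_of_tendsto hlim (Eventually.of_forall key)
  linarith

lemma key_ineq {x : ℝ} (hx : 0 < x) : trig x + x * (-2 * trig3 x) < 0 := by
  have h1 := trig_upper hx
  have h2 := trig3_lower hx
  have h3 : x * (1 / (2 * x ^ 2) + 1 / (2 * x ^ 3)) ≤ x * trig3 x :=
    mul_le_mul_of_nonneg_left h2 hx.le
  have h5 : 1 / (x + 1/2) < 1 / x := by
    apply one_div_lt_one_div_of_lt hx
    linarith
  have h6 : 1 / x / 2 + 1 / x ^ 2 / 2 ≤ x * trig3 x := by
    have q1 : x * (1 / (2 * x ^ 2)) = 1 / x / 2 := by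
      field_simp
    have q2 : x * (1 / (2 * x ^ 3)) = 1 / x ^ 2 / 2 := by
      field_simp
    have q3 : x * (1 / (2 * x ^ 2) + 1 / (2 * x ^ 3))
        = x * (1 / (2 * x ^ 2)) + x * (1 / (2 * x ^ 3)) := by ring
    linarith [h3, q1, q2, q3]
  have e : x * (-2 * trig3 x) = -2 * (x * trig3 x) := by ring
  rw [e]
  linarith [h1, h5, h6]

end TrigammaAux

open TrigammaAux in
theorem trigamma_times_id_strictAnti :
    StrictAntiOn
      (fun t : ℝ => t * deriv (deriv (fun x : ℝ => Real.log (Real.Gamma x))) t)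
      (Ioi (0 : ℝ)) := by
  have key : ∀ t ∈ Ioi (0:ℝ), deriv (deriv (fun x : ℝ => Real.log (Real.Gamma x))) t = trig t := by
    intro t ht
    have e1 : deriv (fun x : ℝ => Real.log (Real.Gamma x)) =ᶠ[𝓝 t] psi0 := by
      filter_upwards [isOpen_Ioi.mem_nhds ht] with y hy
      exact (hasDerivAt_logGamma hy).deriv
    rw [e1.deriv_eq]
    exact (hasDerivAt_psi0 ht).deriv
  have anti : StrictAntiOn (fun t : ℝ => t * trig t) (Ioi 0) := by
    have hderiv : ∀ x ∈ Ioi (0:ℝ), HasDerivAt (fun t : ℝ => t * trig t)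
        (1 * trig x + x * (-2 * trig3 x)) x :=
      fun x hx => (hasDerivAt_id x).mul (hasDerivAt_trig hx)
    apply strictAntiOn_of_deriv_neg (convex_Ioi 0)
    · exact fun x hx => (hderiv x hx).differentiableAt.continuousAt.continuousWithinAt
    · intro x hx
      rw [interior_Ioi] at hx
      rw [(hderiv x hx).deriv]
      have := key_ineq hx
      linarith [key_ineq (mem_Ioi.mp hx)]
  intro s hs t ht hst
  simp only
  rw [key s hs, key t ht]
  exact anti hs ht hst
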